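/- Let G : ℝ → ℝ be continuously differentiable with G'(r)/r monotonically decreasing on r > 0. Then for all r ≥ 0 and r₀ > 0, G(r) ≤ G'(r₀)·r²/(2r₀) + (G(r₀) − (r₀/2)·G'(r₀)), with equality when r = r₀. -/

import Mathlib

/-- Super-Gaussian majorization inequality (Lemma 1):
if `G` is continuously differentiable and `r ↦ G'(r)/r` is monotonically
decreasing on `r > 0`, then for all `r ≥ 0` and `r₀ > 0`,
`G(r) ≤ G'(r₀) r²/(2 r₀) + (G(r₀) − (r₀/2) G'(r₀))`, with equality at `r = r₀`. -/
theorem supergauss_majorization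
    (G : ℝ → ℝ) (hG : ContDiff ℝ 1 G)
    (hmono : AntitoneOn (fun r => deriv G r / r) (Set.Ioi (0 : ℝ))) :
    (∀ r r₀ : ℝ, 0 ≤ r → 0 < r₀ →
      G r ≤ deriv G r₀ * r ^ 2 / (2 * r₀) + (G r₀ - r₀ / 2 * deriv G r₀)) ∧
    (∀ r₀ : ℝ, 0 < r₀ →
      G r₀ = deriv G r₀ * r₀ ^ 2 / (2 * r₀) + (G r₀ - r₀ / 2 * deriv G r₀)) := by
  constructor
  · intro r r₀ hr hr₀
    set c := deriv G r₀ / r₀ with hc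
    have hGd : Differentiable ℝ G := hG.differentiable one_ne_zero
    set H : ℝ → ℝ := fun x => G x - c * x ^ 2 / 2 with hH
    have hHd : Differentiable ℝ H := by
      apply hGd.sub
      fun_prop
    have hderiv : ∀ x : ℝ, deriv H x = deriv G x - c * x := by
      intro x
      have h2 : HasDerivAt (fun x : ℝ => c * x ^ 2 / 2) (c * x) x := by
        have : HasDerivAt (fun x : ℝ => c * x ^ 2 / 2) (c * (((2:ℕ):ℝ) * x ^ (2 - 1)) / 2) x :=
          ((hasDerivAt_pow 2 x).const_mul c).div_const 2
        convert this using 1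
        ring
      exact ((hGd x).hasDerivAt.sub h2).deriv
    have key : H r ≤ H r₀ := by
      rcases le_total r r₀ with h | h
      · have hmo : MonotoneOn H (Set.Icc 0 r₀) := by
          apply monotoneOn_of_deriv_nonneg (convex_Icc _ _) hHd.continuous.continuousOn
            hHd.differentiableOn
          intro x hx
          rw [interior_Icc] at hx
          rw [hderiv]
          have hx0 : 0 < x := hx.1
          have hle : c ≤ deriv G x / x :=
            hmono (Set.mem_Ioi.mpr hx0) (Set.mem_Ioi.mpr hr₀) hx.2.le
          have := (le_div_iff₀ hx0).mp hle
          linarith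
        exact hmo ⟨hr, h⟩ ⟨hr₀.le, le_rfl⟩ h
      · have han : AntitoneOn H (Set.Icc r₀ r) := by
          apply antitoneOn_of_deriv_nonpos (convex_Icc _ _) hHd.continuous.continuousOn
            hHd.differentiableOn
          intro x hx
          rw [interior_Icc] at hx
          rw [hderiv]
          have hx0 : 0 < x := lt_trans hr₀ hx.1
          have hle : deriv G x / x ≤ c :=
            hmono (Set.mem_Ioi.mpr hr₀) (Set.mem_Ioi.mpr hx0) hx.1.le
          have := (div_le_iff₀ hx0).mp hle
          linarith
        exact han ⟨le_rfl, h⟩ ⟨h, le_rfl⟩ h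
    have hr₀ne : r₀ ≠ 0 := hr₀.ne'
    have e1 : c * r ^ 2 / 2 = deriv G r₀ * r ^ 2 / (2 * r₀) := by
      rw [hc]; ring
    have e2 : c * r₀ ^ 2 / 2 = r₀ / 2 * deriv G r₀ := by
      rw [hc]; field_simp
    simp only [hH] at key
    linarith
  · intro r₀ hr₀
    have hr₀ne : r₀ ≠ 0 := hr₀.ne'
    field_simp
    ring
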